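/- Let γ be Euclidean gamma matrices with charge-conjugation matrix C, and let ξ : Fin 4 → R be a Grassmann-even Majorana spinor over a ℂ-algebra R. Then the outer product ξ ξ̄ has the expansion: for all spinor indices α, β, ξ_α·ξ̄_β = (1/4)·Σ_μ (ξ̄γ_μξ)·(γ_μ)_{αβ} - (1/4)·Σ_{μ<ν} (ξ̄σ_{μν}ξ)·(σ_{μν})_{αβ}. -/

import Mathlib

open Matrix Complex BigOperators

noncomputable section

abbrev M4 : Type := Matrix (Fin 4) (Fin 4) ℂ

/-- Euclidean Clifford relation: γ_μγ_ν + γ_νγ_μ = 2δ_{μν}·1. -/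
def CliffordRel (γ : Fin 4 → M4) : Prop :=
  ∀ μ ν, γ μ * γ ν + γ ν * γ μ = if μ = ν then (2 : ℂ) • (1 : M4) else 0

/-- γ5 := -(γ_0 γ_1 γ_2 γ_3). -/
def gamma5 (γ : Fin 4 → M4) : M4 := -(γ 0 * γ 1 * γ 2 * γ 3)

/-- σ_{μν} := (γ_μγ_ν - γ_νγ_μ)/2 = [γ_μ, γ_ν]/2. -/
def sigmaMat (γ : Fin 4 → M4) (μ ν : Fin 4) : M4 :=
  (2⁻¹ : ℂ) • (γ μ * γ ν - γ ν * γ μ)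

/-- Charge-conjugation matrix: invertible, Cᵀ = -C, C⁻¹γ_μC = -(γ_μ)ᵀ. -/
def ChargeConj (γ : Fin 4 → M4) (C : M4) : Prop :=
  IsUnit C.det ∧ Cᵀ = -C ∧ ∀ μ, C⁻¹ * γ μ * C = -(γ μ)ᵀ

/-- Majorana conjugate row vector: ξ̄_β := -Σ_α ξ_α·(C⁻¹)_{αβ}. -/
def MajBar {R : Type*} [Ring R] [Algebra ℂ R] (C : M4) (ξ : Fin 4 → R) (β : Fin 4) : R :=
  -∑ α, (C⁻¹ α β) • ξ α

/-- Spinor bilinear: ξ̄Mχ := Σ_{β,γ'} ξ̄_β·M_{βγ'}·χ_{γ'} (complex entries act by scalar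
multiplication). -/
def bilin {R : Type*} [Ring R] [Algebra ℂ R] (C : M4) (M : M4) (ξ χ : Fin 4 → R) : R :=
  ∑ β, ∑ g, M β g • (MajBar C ξ β * χ g)

section Aux

variable {γ : Fin 4 → M4}

lemma g_sq (hcl : CliffordRel γ) (μ : Fin 4) : γ μ * γ μ = 1 := by
  have h := hcl μ μ
  rw [if_pos rfl] at h
  have h2 : (2:ℂ) • (γ μ * γ μ) = (2:ℂ) • (1 : M4) := by
    rw [two_smul]; exact h
  exact smul_right_injective _ two_ne_zero h2

lemma g_swap (hcl : CliffordRel γ) {μ ν : Fin 4} (h : ν ≠ μ) :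
    γ μ * γ ν = -(γ ν * γ μ) := by
  have h2 := hcl μ ν
  rw [if_neg (Ne.symm h)] at h2
  linear_combination (norm := abel) h2

lemma g_sq' (hcl : CliffordRel γ) (μ : Fin 4) (X : M4) : γ μ * (γ μ * X) = X := by
  rw [← mul_assoc, g_sq hcl, one_mul]

lemma g_swap' (hcl : CliffordRel γ) {μ ν : Fin 4} (h : ν ≠ μ) (X : M4) :
    γ μ * (γ ν * X) = -(γ ν * (γ μ * X)) := by
  rw [← mul_assoc, g_swap hcl h, ← mul_assoc, neg_mul]

lemma half_trick {a : ℂ} (h : a = -a) : a = 0 := by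
  have h2 : a + a = 0 := by nth_rewrite 2 [h]; ring
  exact add_self_eq_zero.mp h2

lemma conj_trace (hcl : CliffordRel γ) (a : Fin 4) (Z : M4) :
    trace (γ a * (Z * γ a)) = trace Z := by
  rw [trace_mul_comm, mul_assoc, g_sq hcl, mul_one]

lemma tr_g (hcl : CliffordRel γ) (μ : Fin 4) : trace (γ μ) = 0 := by
  obtain ⟨ν, hν⟩ : ∃ ν, ν ≠ μ := by
    rcases eq_or_ne μ 0 with h | h
    · exact ⟨1, by simp [h]⟩
    · exact ⟨0, Ne.symm h⟩
  apply half_trick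
  calc trace (γ μ) = trace (γ ν * (γ μ * γ ν)) := (conj_trace hcl ν (γ μ)).symm
    _ = trace (-(γ μ)) := by rw [g_swap' hcl (Ne.symm hν), g_sq hcl, mul_one]
    _ = -trace (γ μ) := trace_neg _

lemma tr2 (hcl : CliffordRel γ) {μ ν : Fin 4} (h : μ ≠ ν) : trace (γ μ * γ ν) = 0 := by
  apply half_trick
  calc trace (γ μ * γ ν) = trace (γ ν * γ μ) := trace_mul_comm _ _
    _ = trace (-(γ μ * γ ν)) := by rw [g_swap hcl h]
    _ = -trace (γ μ * γ ν) := trace_neg _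

lemma tr3 (hcl : CliffordRel γ) {μ ν ρ : Fin 4} (h1 : μ ≠ ν) (h2 : μ ≠ ρ) (h3 : ν ≠ ρ) :
    trace (γ μ * (γ ν * γ ρ)) = 0 := by
  obtain ⟨τ, hτ1, hτ2, hτ3⟩ : ∃ τ, τ ≠ μ ∧ τ ≠ ν ∧ τ ≠ ρ := by
    revert h1 h2 h3; revert μ ν ρ; decide
  apply half_trick
  have key : γ τ * (γ μ * (γ ν * γ ρ) * γ τ) = -(γ μ * (γ ν * γ ρ)) := by
    simp only [mul_assoc, g_swap' hcl hτ1, g_swap' hcl hτ2, g_swap' hcl hτ3,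
      g_swap hcl hτ1, g_swap hcl hτ2, g_swap hcl hτ3, g_sq hcl, g_sq' hcl,
      mul_neg, neg_neg, mul_one, neg_mul]
  calc trace (γ μ * (γ ν * γ ρ)) = trace (γ τ * (γ μ * (γ ν * γ ρ) * γ τ)) :=
        (conj_trace hcl τ _).symm
    _ = trace (-(γ μ * (γ ν * γ ρ))) := by rw [key]
    _ = -trace (γ μ * (γ ν * γ ρ)) := trace_neg _

lemma tr4 (hcl : CliffordRel γ) {μ ν ρ τ : Fin 4} (h1 : μ ≠ ν) (h2 : μ ≠ ρ) (h3 : μ ≠ τ)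
    (h4 : ν ≠ ρ) (h5 : ν ≠ τ) (h6 : ρ ≠ τ) :
    trace (γ μ * (γ ν * (γ ρ * γ τ))) = 0 := by
  apply half_trick
  have key : γ μ * (γ μ * (γ ν * (γ ρ * γ τ)) * γ μ) = -(γ μ * (γ ν * (γ ρ * γ τ))) := by
    simp only [mul_assoc, g_swap' hcl h1, g_swap' hcl h2, g_swap' hcl h3,
      g_swap hcl h1, g_swap hcl h2, g_swap hcl h3, g_sq hcl, g_sq' hcl,
      mul_neg, neg_neg, mul_one, neg_mul]
  calc trace (γ μ * (γ ν * (γ ρ * γ τ))) = trace (γ μ * (γ μ * (γ ν * (γ ρ * γ τ)) * γ μ)) :=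
        (conj_trace hcl μ _).symm
    _ = trace (-(γ μ * (γ ν * (γ ρ * γ τ)))) := by rw [key]
    _ = -trace (γ μ * (γ ν * (γ ρ * γ τ))) := trace_neg _

/-- The sixteen basis products of gamma matrices. -/
def Bas (γ : Fin 4 → M4) : Fin 16 → M4
  | 0 => 1 | 1 => γ 0 | 2 => γ 1 | 3 => γ 2 | 4 => γ 3
  | 5 => γ 0*γ 1 | 6 => γ 0*γ 2 | 7 => γ 0*γ 3 | 8 => γ 1*γ 2 | 9 => γ 1*γ 3 | 10 => γ 2*γ 3
  | 11 => γ 0*(γ 1*γ 2) | 12 => γ 0*(γ 1*γ 3) | 13 => γ 0*(γ 2*γ 3) | 14 => γ 1*(γ 2*γ 3)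
  | _ => γ 0*(γ 1*(γ 2*γ 3))

/-- The dual family (reversed products). -/
def Dua (γ : Fin 4 → M4) : Fin 16 → M4
  | 0 => 1 | 1 => γ 0 | 2 => γ 1 | 3 => γ 2 | 4 => γ 3
  | 5 => γ 1*γ 0 | 6 => γ 2*γ 0 | 7 => γ 3*γ 0 | 8 => γ 2*γ 1 | 9 => γ 3*γ 1 | 10 => γ 3*γ 2
  | 11 => γ 2*(γ 1*γ 0) | 12 => γ 3*(γ 1*γ 0) | 13 => γ 3*(γ 2*γ 0) | 14 => γ 3*(γ 2*γ 1)
  | _ => γ 3*(γ 2*(γ 1*γ 0))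

set_option maxHeartbeats 2000000 in
lemma ortho (hcl : CliffordRel γ) (i j : Fin 16) :
    trace (Dua γ i * Bas γ j) = if i = j then 4 else 0 := by
  have d01 : (0:Fin 4) ≠ 1 := by decide
  have d02 : (0:Fin 4) ≠ 2 := by decide
  have d03 : (0:Fin 4) ≠ 3 := by decide
  have d12 : (1:Fin 4) ≠ 2 := by decide
  have d13 : (1:Fin 4) ≠ 3 := by decide
  have d23 : (2:Fin 4) ≠ 3 := by decide
  have t1 := tr_g hcl
  have t01 := tr2 hcl d01; have t02 := tr2 hcl d02; have t03 := tr2 hcl d03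
  have t12 := tr2 hcl d12; have t13 := tr2 hcl d13; have t23 := tr2 hcl d23
  have t012 := tr3 hcl d01 d02 d12
  have t013 := tr3 hcl d01 d03 d13
  have t023 := tr3 hcl d02 d03 d23
  have t123 := tr3 hcl d12 d13 d23
  have t0123 := tr4 hcl d01 d02 d03 d12 d13 d23
  have tr1 : trace (1 : M4) = 4 := by simp [trace_one]
  fin_cases i <;> fin_cases j <;>
    simp only [Fin.reduceFinMk, Bas, Dua, mul_one, one_mul, mul_assoc,
      g_swap' hcl d01, g_swap' hcl d02, g_swap' hcl d03,
      g_swap' hcl d12, g_swap' hcl d13, g_swap' hcl d23,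
      g_swap hcl d01, g_swap hcl d02, g_swap hcl d03,
      g_swap hcl d12, g_swap hcl d13, g_swap hcl d23,
      g_sq hcl, g_sq' hcl, mul_neg, neg_mul, neg_neg, trace_neg,
      t1, t01, t02, t03, t12, t13, t23, t012, t013, t023, t123, t0123, tr1,
      neg_zero] <;>
    first | rfl | rw [if_neg (by decide)] | rw [if_pos (by decide)]

lemma bas_indep (hcl : CliffordRel γ) : LinearIndependent ℂ (Bas γ) := by
  rw [Fintype.linearIndependent_iff]
  intro c hc i
  have h := congrArg (fun X => trace (Dua γ i * X)) hc
  simp only [Matrix.mul_sum, Matrix.mul_smul, trace_sum, trace_smul, Matrix.mul_zero,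
    trace_zero, smul_eq_mul] at h
  rw [Finset.sum_congr rfl (fun j _ => by rw [ortho hcl i j])] at h
  simp only [mul_ite, mul_zero, Finset.sum_ite_eq, Finset.mem_univ, if_true, mul_comm] at h
  simpa using h

lemma completeness (hcl : CliffordRel γ) (M : M4) :
    ∑ i : Fin 16, trace (Dua γ i * M) • Bas γ i = (4:ℂ) • M := by
  have hspan : Submodule.span ℂ (Set.range (Bas γ)) = ⊤ :=
    (bas_indep hcl).span_eq_top_of_card_eq_finrank (by simp [Module.finrank_matrix])
  have hM : M ∈ Submodule.span ℂ (Set.range (Bas γ)) := hspan ▸ Submodule.mem_top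
  induction hM using Submodule.span_induction with
  | mem x hx =>
      obtain ⟨j, rfl⟩ := hx
      rw [Finset.sum_congr rfl (fun i _ => by rw [ortho hcl i j])]
      simp
  | zero => simp
  | add x y _ _ hx hy => simp only [Matrix.mul_add, trace_add, add_smul, smul_add,
      Finset.sum_add_distrib, hx, hy]
  | smul a x _ hx =>
      calc ∑ i : Fin 16, trace (Dua γ i * (a • x)) • Bas γ i
          = ∑ i : Fin 16, a • (trace (Dua γ i * x) • Bas γ i) := by
            refine Finset.sum_congr rfl fun i _ => ?_
            rw [Matrix.mul_smul, trace_smul, smul_eq_mul, mul_smul]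
        _ = a • ((4:ℂ) • x) := by rw [← Finset.smul_sum, hx]
        _ = (4:ℂ) • a • x := smul_comm _ _ _

lemma sum16 {α : Type*} [AddCommMonoid α] (f : Fin 16 → α) :
    (∑ i, f i) = f 0 + f 1 + f 2 + f 3 + f 4 + f 5 + f 6 + f 7 + f 8
    + f 9 + f 10 + f 11 + f 12 + f 13 + f 14 + f 15 := by
  have finmk16 : ∀ (k:ℕ) (h:k<16), (⟨k,h⟩:Fin 16) = (Fin.ofNat 16 k) := fun k h => by
    simp [Fin.ext_iff, Nat.mod_eq_of_lt h]
  simp only [Fin.sum_univ_succ, Fin.sum_univ_zero]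
  simp [Fin.succ]
  abel

lemma sig_eq (hcl : CliffordRel γ) {μ ν : Fin 4} (h : μ ≠ ν) :
    sigmaMat γ μ ν = γ μ * γ ν := by
  rw [sigmaMat, g_swap hcl h, sub_neg_eq_add, ← two_smul ℂ, smul_smul]
  norm_num

variable {C : M4}

lemma vanish (hC : ChargeConj γ C) (A M : M4) (hA : Aᵀ = C⁻¹ * (A * C))
    (hM : Mᵀ = -(C⁻¹ * M * C)) : trace (A * M) = 0 := by
  have hCC : C⁻¹ * C = 1 := nonsing_inv_mul C hC.1
  have hCC' : C * C⁻¹ = 1 := mul_nonsing_inv C hC.1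
  apply half_trick
  calc trace (A*M) = trace ((A*M)ᵀ) := (trace_transpose _).symm
    _ = trace (Mᵀ * Aᵀ) := by rw [transpose_mul]
    _ = -trace ((C⁻¹ * M * C) * (C⁻¹ * (A * C))) := by rw [hA, hM, neg_mul, trace_neg]
    _ = -trace (C⁻¹ * (M * (A * C))) := by
        congr 1
        simp only [mul_assoc]
        rw [← mul_assoc C C⁻¹, hCC', one_mul]
    _ = -trace (M * A) := by
        rw [trace_mul_comm]
        congr 1
        simp only [mul_assoc]
        rw [hCC', mul_one]
    _ = -trace (A * M) := by rw [trace_mul_comm]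

set_option maxHeartbeats 1000000 in
lemma key (hcl : CliffordRel γ) (hC : ChargeConj γ C) (M : M4)
    (hM : Mᵀ = -(C⁻¹ * M * C)) :
    (4:ℂ) • M = (∑ μ, trace (γ μ * M) • γ μ) -
      ∑ μ, ∑ ν, (if μ < ν then trace (sigmaMat γ μ ν * M) • sigmaMat γ μ ν else 0) := by
  have hCC : C⁻¹ * C = 1 := nonsing_inv_mul C hC.1
  have hCC' : C * C⁻¹ = 1 := mul_nonsing_inv C hC.1
  have hc1 : ∀ X : M4, C * (C⁻¹ * X) = X := fun X => by rw [← mul_assoc, hCC', one_mul]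
  have hc2 : ∀ X : M4, C⁻¹ * (C * X) = X := fun X => by rw [← mul_assoc, hCC, one_mul]
  have gT : ∀ μ, (γ μ)ᵀ = -(C⁻¹ * (γ μ * C)) := fun μ => by
    rw [← mul_assoc, hC.2.2 μ, neg_neg]
  have d01 : (0:Fin 4) ≠ 1 := by decide
  have d02 : (0:Fin 4) ≠ 2 := by decide
  have d03 : (0:Fin 4) ≠ 3 := by decide
  have d12 : (1:Fin 4) ≠ 2 := by decide
  have d13 : (1:Fin 4) ≠ 3 := by decide
  have d23 : (2:Fin 4) ≠ 3 := by decide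
  -- the six vanishing coefficients
  have v0 : trace ((1:M4) * M) = 0 := by
    refine vanish hC _ _ ?_ hM
    rw [transpose_one, one_mul, hCC]
  have v11 : trace ((γ 2*(γ 1*γ 0)) * M) = 0 := by
    refine vanish hC _ _ ?_ hM
    rw [transpose_mul, transpose_mul, gT 0, gT 1, gT 2]
    simp only [neg_mul, mul_neg, neg_neg, mul_assoc, hc1, hc2,
      g_swap' hcl d01, g_swap' hcl d02, g_swap' hcl d12,
      g_swap' hcl d03, g_swap' hcl d13, g_swap' hcl d23]
  have v12 : trace ((γ 3*(γ 1*γ 0)) * M) = 0 := by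
    refine vanish hC _ _ ?_ hM
    rw [transpose_mul, transpose_mul, gT 0, gT 1, gT 3]
    simp only [neg_mul, mul_neg, neg_neg, mul_assoc, hc1, hc2,
      g_swap' hcl d01, g_swap' hcl d02, g_swap' hcl d12,
      g_swap' hcl d03, g_swap' hcl d13, g_swap' hcl d23]
  have v13 : trace ((γ 3*(γ 2*γ 0)) * M) = 0 := by
    refine vanish hC _ _ ?_ hM
    rw [transpose_mul, transpose_mul, gT 0, gT 2, gT 3]
    simp only [neg_mul, mul_neg, neg_neg, mul_assoc, hc1, hc2,
      g_swap' hcl d01, g_swap' hcl d02, g_swap' hcl d12,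
      g_swap' hcl d03, g_swap' hcl d13, g_swap' hcl d23]
  have v14 : trace ((γ 3*(γ 2*γ 1)) * M) = 0 := by
    refine vanish hC _ _ ?_ hM
    rw [transpose_mul, transpose_mul, gT 1, gT 2, gT 3]
    simp only [neg_mul, mul_neg, neg_neg, mul_assoc, hc1, hc2,
      g_swap' hcl d01, g_swap' hcl d02, g_swap' hcl d12,
      g_swap' hcl d03, g_swap' hcl d13, g_swap' hcl d23]
  have v15 : trace ((γ 3*(γ 2*(γ 1*γ 0))) * M) = 0 := by
    refine vanish hC _ _ ?_ hM
    rw [transpose_mul, transpose_mul, transpose_mul, gT 0, gT 1, gT 2, gT 3]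
    simp only [neg_mul, mul_neg, neg_neg, mul_assoc, hc1, hc2,
      g_swap' hcl d01, g_swap' hcl d02, g_swap' hcl d12,
      g_swap' hcl d03, g_swap' hcl d13, g_swap' hcl d23]
  have comp := completeness hcl M
  rw [sum16] at comp
  simp only [Bas, Dua] at comp
  rw [v0, v11, v12, v13, v14, v15] at comp
  -- convert reversed pairs
  rw [g_swap hcl d01, g_swap hcl d02, g_swap hcl d03,
      g_swap hcl d12, g_swap hcl d13, g_swap hcl d23] at comp
  simp only [neg_mul, trace_neg, neg_smul, zero_smul, add_zero, zero_add] at comp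
  rw [Fin.sum_univ_four]
  have hif : (∑ μ, ∑ ν, (if μ < ν then trace (sigmaMat γ μ ν * M) • sigmaMat γ μ ν else 0))
      = trace (sigmaMat γ 0 1 * M) • sigmaMat γ 0 1
      + trace (sigmaMat γ 0 2 * M) • sigmaMat γ 0 2
      + trace (sigmaMat γ 0 3 * M) • sigmaMat γ 0 3
      + trace (sigmaMat γ 1 2 * M) • sigmaMat γ 1 2
      + trace (sigmaMat γ 1 3 * M) • sigmaMat γ 1 3
      + trace (sigmaMat γ 2 3 * M) • sigmaMat γ 2 3 := by
    simp [Fin.sum_univ_four]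
    abel
  rw [hif, sig_eq hcl d01, sig_eq hcl d02, sig_eq hcl d03,
      sig_eq hcl d12, sig_eq hcl d13, sig_eq hcl d23]
  rw [← comp]
  abel


lemma hbil {R : Type*} [Ring R] [Algebra ℂ R] (C : M4) (ξ : Fin 4 → R) (Mx : M4) :
    bilin C Mx ξ ξ = -∑ a, ∑ g, ((C⁻¹ * Mx) a g) • (ξ a * ξ g) := by
  unfold bilin
  have h1 : ∀ b g, Mx b g • (MajBar C ξ b * ξ g)
      = -∑ a, (C⁻¹ a b * Mx b g) • (ξ a * ξ g) := by
    intro b g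
    rw [MajBar, neg_mul, Finset.sum_mul, smul_neg, Finset.smul_sum]
    congr 1
    refine Finset.sum_congr rfl fun a _ => ?_
    rw [smul_mul_assoc, smul_smul, mul_comm]
  simp only [h1, Finset.sum_neg_distrib]
  congr 1
  rw [Finset.sum_congr rfl fun b (_ : b ∈ Finset.univ) =>
    (Finset.sum_comm (s := Finset.univ) (t := Finset.univ)
      (f := fun g a => (C⁻¹ a b * Mx b g) • (ξ a * ξ g)))]
  rw [Finset.sum_comm]
  refine Finset.sum_congr rfl fun a _ => ?_
  rw [Finset.sum_comm]
  refine Finset.sum_congr rfl fun g _ => ?_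
  rw [← Finset.sum_smul, Matrix.mul_apply]

lemma bilin_sum {R : Type*} [Ring R] [Algebra ℂ R] (C : M4) (ξ : Fin 4 → R) {ι : Type*}
    [Fintype ι] (c : ι → ℂ) (F : ι → M4) :
    ∑ i, c i • bilin C (F i) ξ ξ
      = -∑ a, ∑ g, ((∑ i, c i • (C⁻¹ * F i)) a g) • (ξ a * ξ g) := by
  have e1 : ∀ i, c i • bilin C (F i) ξ ξ
      = -∑ a, ∑ g, (c i * (C⁻¹ * F i) a g) • (ξ a * ξ g) := by
    intro i
    rw [hbil, smul_neg]
    congr 1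
    rw [Finset.smul_sum]
    refine Finset.sum_congr rfl fun a _ => ?_
    rw [Finset.smul_sum]
    refine Finset.sum_congr rfl fun g _ => ?_
    rw [smul_smul]
  rw [Finset.sum_congr rfl fun i (_ : i ∈ Finset.univ) => e1 i, Finset.sum_neg_distrib]
  congr 1
  rw [Finset.sum_comm]
  refine Finset.sum_congr rfl fun a _ => ?_
  rw [Finset.sum_comm]
  refine Finset.sum_congr rfl fun g _ => ?_
  rw [← Finset.sum_smul]
  congr 1
  rw [Matrix.sum_apply]
  refine Finset.sum_congr rfl fun i _ => ?_
  rw [Matrix.smul_apply, smul_eq_mul]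

set_option maxHeartbeats 1000000

theorem statement17 {R : Type*} [Ring R] [Algebra ℂ R]
    (γ : Fin 4 → M4) (C : M4) (hcl : CliffordRel γ) (hC : ChargeConj γ C)
    (ξ : Fin 4 → R) (heven : ∀ α β, ξ α * ξ β = ξ β * ξ α) :
    ∀ α β, ξ α * MajBar C ξ β =
      (4⁻¹ : ℂ) • ∑ μ, γ μ α β • bilin C (γ μ) ξ ξ
      - (4⁻¹ : ℂ) • ∑ μ, ∑ ν,
          (if μ < ν then sigmaMat γ μ ν α β • bilin C (sigmaMat γ μ ν) ξ ξ else 0) := by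
  intro α β
  obtain ⟨hdet, hCT, hgc⟩ := hC
  have hCC : C⁻¹ * C = 1 := nonsing_inv_mul C hdet
  have hCC' : C * C⁻¹ = 1 := mul_nonsing_inv C hdet
  have hc1 : ∀ X : M4, C * (C⁻¹ * X) = X := fun X => by rw [← mul_assoc, hCC', one_mul]
  have hc2 : ∀ X : M4, C⁻¹ * (C * X) = X := fun X => by rw [← mul_assoc, hCC, one_mul]
  have hCiT : C⁻¹ᵀ = -C⁻¹ := by
    rw [Matrix.transpose_nonsing_inv, hCT]
    exact Matrix.inv_eq_right_inv (by rw [Matrix.neg_mul, Matrix.mul_neg, neg_neg, hCC'])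
  set E := Matrix.single α β (1:ℂ) with hEdef
  set Et := Matrix.single β α (1:ℂ) with hEtdef
  have hET : Eᵀ = Et := by
    ext i j
    simp [hEdef, hEtdef, Matrix.transpose_apply, Matrix.single, and_comm]
  have hETt : Etᵀ = E := by
    ext i j
    simp [hEdef, hEtdef, Matrix.transpose_apply, Matrix.single, and_comm]
  set M₀ : M4 := (2⁻¹:ℂ) • (Et - C * (E * C⁻¹)) with hM₀def
  have cond : M₀ᵀ = -(C⁻¹ * M₀ * C) := by
    have L : M₀ᵀ = (2⁻¹:ℂ) • (E - C⁻¹ * (Et * C)) := by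
      rw [hM₀def, transpose_smul, transpose_sub, hETt, transpose_mul, transpose_mul, hET,
        hCiT, hCT]
      congr 2
      simp [Matrix.neg_mul, Matrix.mul_neg, neg_neg, mul_assoc]
    have Rr : -(C⁻¹ * M₀ * C) = (2⁻¹:ℂ) • (E - C⁻¹ * (Et * C)) := by
      rw [hM₀def, Matrix.mul_smul, Matrix.smul_mul, Matrix.mul_sub, Matrix.sub_mul, hc2,
        mul_assoc E C⁻¹ C, hCC, mul_one, ← smul_neg, neg_sub, mul_assoc]
    rw [L, Rr]
  have tms : ∀ (A : M4) (i j : Fin 4), trace (Matrix.single i j (1:ℂ) * A) = A j i := by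
    intro A i j
    rw [Matrix.trace]
    rw [Finset.sum_eq_single i
      (fun x _ hx => by simp [Matrix.diag, hx])
      (by simp)]
    simp [Matrix.diag]
  have trM₀ : ∀ A : M4, (C⁻¹ * A * C = -Aᵀ) → trace (A * M₀) = A α β := by
    intro A hA
    have e1 : trace (A * Et) = A α β := by
      rw [trace_mul_comm, hEtdef]; exact tms A β α
    have e2 : trace (A * (C * (E * C⁻¹))) = -(A α β) := by
      have step : A * (C * (E * C⁻¹)) = (A * (C * E)) * C⁻¹ := by
        simp only [mul_assoc]
      rw [step, trace_mul_comm, show C⁻¹ * (A * (C * E)) = (C⁻¹ * A * C) * E from by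
        simp only [mul_assoc], hA, Matrix.neg_mul, trace_neg]
      congr 1
      rw [trace_mul_comm, hEdef, tms Aᵀ α β, Matrix.transpose_apply]
    rw [hM₀def, Matrix.mul_smul, trace_smul, Matrix.mul_sub, trace_sub, e1, e2,
      sub_neg_eq_add, smul_eq_mul]
    ring
  have hab : ∀ a b, C⁻¹ * (γ a * γ b) * C = (γ b * γ a)ᵀ := by
    intro a b
    calc C⁻¹ * (γ a * γ b) * C = (C⁻¹ * γ a * C) * (C⁻¹ * γ b * C) := by
          simp only [mul_assoc, hc1]
      _ = (-(γ a)ᵀ) * (-(γ b)ᵀ) := by rw [hgc a, hgc b]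
      _ = (γ b * γ a)ᵀ := by rw [Matrix.neg_mul, Matrix.mul_neg, neg_neg, ← transpose_mul]
  have sigConj : ∀ μ ν : Fin 4, C⁻¹ * sigmaMat γ μ ν * C = -(sigmaMat γ μ ν)ᵀ := by
    intro μ ν
    rw [sigmaMat, Matrix.mul_smul, Matrix.smul_mul, Matrix.mul_sub, Matrix.sub_mul,
      hab, hab, transpose_smul, transpose_sub, ← smul_neg, neg_sub]
  have hkey := key hcl ⟨hdet, hCT, hgc⟩ M₀ cond
  simp only [trM₀ (γ _) (hgc _), trM₀ (sigmaMat γ _ _) (sigConj _ _)] at hkey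
  have matkey : (∑ μ, γ μ α β • (C⁻¹ * γ μ))
      - (∑ μ, ∑ ν, if μ < ν then sigmaMat γ μ ν α β • (C⁻¹ * sigmaMat γ μ ν) else 0)
      = (2:ℂ) • (C⁻¹ * Et - E * C⁻¹) := by
    have h := congrArg (fun X => C⁻¹ * X) hkey
    simp only [Matrix.mul_smul, Matrix.mul_sub, Matrix.mul_sum, mul_ite,
      Matrix.mul_zero] at h
    rw [← h, hM₀def, Matrix.mul_smul, Matrix.mul_sub, hc2, smul_smul]
    norm_num
  have main : ∀ a g : Fin 4,
      (∑ μ, γ μ α β • (C⁻¹ * γ μ)) a g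
      - (∑ μ, ∑ ν, if μ < ν then sigmaMat γ μ ν α β • (C⁻¹ * sigmaMat γ μ ν) else 0) a g
      = (2:ℂ) * ((C⁻¹ * Et) a g - (E * C⁻¹) a g) := by
    intro a g
    have h := congrFun (congrFun matkey a) g
    simpa [Matrix.sub_apply, Matrix.smul_apply, smul_eq_mul] using h
  -- entry values
  have hT1 : ∀ a g : Fin 4, (C⁻¹ * Et) a g = if g = α then C⁻¹ a β else 0 := by
    intro a g
    rcases eq_or_ne g α with h | h
    · subst h
      simp [hEtdef]
    · simp [hEtdef, h]
  have hT2 : ∀ a g : Fin 4, (E * C⁻¹) a g = if a = α then C⁻¹ β g else 0 := by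
    intro a g
    rcases eq_or_ne a α with h | h
    · subst h
      simp [hEdef]
    · simp [hEdef, h]
  have hasym : ∀ i j : Fin 4, C⁻¹ i j = -C⁻¹ j i := by
    intro i j
    have h := congrFun (congrFun hCiT j) i
    simpa [Matrix.transpose_apply, Matrix.neg_apply] using h
  -- rewrite RHS of the goal
  have hR1 : ∑ μ, γ μ α β • bilin C (γ μ) ξ ξ
      = -∑ a, ∑ g, ((∑ μ, γ μ α β • (C⁻¹ * γ μ)) a g) • (ξ a * ξ g) :=
    bilin_sum C ξ _ _
  have hR2 : (∑ μ, ∑ ν, (if μ < ν then sigmaMat γ μ ν α β • bilin C (sigmaMat γ μ ν) ξ ξ else 0))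
      = -∑ a, ∑ g, ((∑ μ, ∑ ν, if μ < ν then sigmaMat γ μ ν α β • (C⁻¹ * sigmaMat γ μ ν) else 0) a g)
          • (ξ a * ξ g) := by
    have base := bilin_sum C ξ (ι := Fin 4 × Fin 4)
      (fun p => if p.1 < p.2 then sigmaMat γ p.1 p.2 α β else 0)
      (fun p => sigmaMat γ p.1 p.2)
    rw [show (∑ μ, ∑ ν, (if μ < ν then sigmaMat γ μ ν α β • bilin C (sigmaMat γ μ ν) ξ ξ else 0))
        = ∑ p : Fin 4 × Fin 4, (if p.1 < p.2 then sigmaMat γ p.1 p.2 α β else 0)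
            • bilin C (sigmaMat γ p.1 p.2) ξ ξ from by
      rw [Fintype.sum_prod_type]
      refine Finset.sum_congr rfl fun μ _ => Finset.sum_congr rfl fun ν _ => ?_
      split <;> simp]
    rw [base]
    have hXY : (∑ p : Fin 4 × Fin 4, (if p.1 < p.2 then sigmaMat γ p.1 p.2 α β else 0)
          • (C⁻¹ * sigmaMat γ p.1 p.2))
        = ∑ μ, ∑ ν, if μ < ν then sigmaMat γ μ ν α β • (C⁻¹ * sigmaMat γ μ ν) else 0 := by
      rw [Fintype.sum_prod_type]
      refine Finset.sum_congr rfl fun μ _ => Finset.sum_congr rfl fun ν _ => ?_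
      split <;> simp
    rw [hXY]
  rw [hR1, hR2]
  -- rewrite LHS of the goal
  rw [show ξ α * MajBar C ξ β = -∑ g, C⁻¹ g β • (ξ α * ξ g) from by
    rw [MajBar, mul_neg, Finset.mul_sum]
    congr 1
    exact Finset.sum_congr rfl fun g _ => mul_smul_comm _ _ _]
  -- combine
  have hA12' : (∑ a, ∑ g, ((∑ μ, γ μ α β • (C⁻¹ * γ μ)) a g) • (ξ a * ξ g))
      - (∑ a, ∑ g, ((∑ μ, ∑ ν, if μ < ν then sigmaMat γ μ ν α β • (C⁻¹ * sigmaMat γ μ ν)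
          else 0) a g) • (ξ a * ξ g))
      = (4:ℂ) • ∑ g, C⁻¹ g β • (ξ α * ξ g) := by
    rw [← Finset.sum_sub_distrib]
    rw [Finset.sum_congr rfl fun a (_ : a ∈ Finset.univ) => (Finset.sum_sub_distrib _ _).symm]
    have e : ∀ a g : Fin 4, ((∑ μ, γ μ α β • (C⁻¹ * γ μ)) a g) • (ξ a * ξ g)
        - ((∑ μ, ∑ ν, if μ < ν then sigmaMat γ μ ν α β • (C⁻¹ * sigmaMat γ μ ν) else 0) a g)
            • (ξ a * ξ g)
        = ((2:ℂ) * ((C⁻¹ * Et) a g - (E * C⁻¹) a g)) • (ξ a * ξ g) := by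
      intro a g
      rw [← sub_smul, main a g]
    simp only [e]
    simp only [hT1, hT2, mul_sub, sub_smul, mul_ite, mul_zero, ite_smul, zero_smul]
    rw [Finset.sum_congr rfl fun a (_ : a ∈ Finset.univ) => Finset.sum_sub_distrib _ _]
    rw [Finset.sum_sub_distrib]
    have p1 : ∀ a : Fin 4, (∑ g, if g = α then ((2:ℂ) * C⁻¹ a β) • (ξ a * ξ g) else 0)
        = ((2:ℂ) * C⁻¹ a β) • (ξ α * ξ a) := by
      intro a
      rw [Finset.sum_ite_eq' Finset.univ α fun g => ((2:ℂ) * C⁻¹ a β) • (ξ a * ξ g)]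
      simp [heven a α]
    have p2 : (∑ a, ∑ g, if a = α then ((2:ℂ) * C⁻¹ β g) • (ξ a * ξ g) else 0)
        = ∑ g, ((2:ℂ) * C⁻¹ β g) • (ξ α * ξ g) := by
      rw [Finset.sum_comm]
      refine Finset.sum_congr rfl fun g _ => ?_
      rw [Finset.sum_ite_eq' Finset.univ α fun a => ((2:ℂ) * C⁻¹ β g) • (ξ a * ξ g)]
      simp
    rw [Finset.sum_congr rfl fun a (_ : a ∈ Finset.univ) => p1 a, p2]
    rw [Finset.smul_sum, ← Finset.sum_sub_distrib]
    refine Finset.sum_congr rfl fun g _ => ?_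
    rw [hasym β g, smul_smul, ← sub_smul]
    congr 1
    ring
  rw [← smul_sub, neg_sub_neg, ← neg_sub, hA12', smul_neg, smul_smul]
  norm_num
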